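/- Let K_{l_1*t_1,...,l_s*t_s} be a complete multipartite graph with t_1 > t_2 > ... > t_s ≥ 1, and let λ be an eigenvalue of its adjacency matrix with λ ∉ {0, −t_1,...,−t_s}. Then every eigenvector z for λ is constant on each set U_i, say with common value z_i on U_i, and these values satisfy (λ + t_i) z_i = m_1 z_1 + m_2 z_2 + ... + m_s z_s for every i, where m_i = l_i t_i. Consequently, if z ≠ 0 then z_i ≠ 0 for all i, and z_i ≠ z_j whenever i ≠ j. -/

import Mathlib

open Matrix

/-- The signed adjacency matrix obtained from the matrix `A` by switching about the
vertex set `X`: entry `(i,j)` is multiplied by `-1` exactly when one of `i, j` lies in `X`. -/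
def switchMatrix {m : Type*} [DecidableEq m] (X : Finset m) (A : Matrix m m ℝ) :
    Matrix m m ℝ :=
  fun i j => (if i ∈ X then (-1 : ℝ) else 1) * A i j * (if j ∈ X then (-1 : ℝ) else 1)

/-- Index set for the parts of `K_{l_1*t_1, …, l_s*t_s}`: the part `U_{i,j}` corresponds
to the pair `⟨i, j⟩`. -/
abbrev PartIdx {s : ℕ} (l : Fin s → ℕ) := (i : Fin s) × Fin (l i)

/-- Vertex type of `K_{l_1*t_1, …, l_s*t_s}`: a vertex is a part together with a position
in that part (the part `⟨i, j⟩` has size `t i`). -/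
abbrev MV {s : ℕ} (l t : Fin s → ℕ) := (p : PartIdx l) × Fin (t p.1)

/-- The complete multipartite graph `K_{l_1*t_1, …, l_s*t_s}` having, for each `i`,
exactly `l i` parts of size `t i`. -/
def cmGraph {s : ℕ} (l t : Fin s → ℕ) : SimpleGraph (MV l t) :=
  SimpleGraph.completeMultipartiteGraph (fun p : PartIdx l => Fin (t p.1))

instance cmDecidable {s : ℕ} (l t : Fin s → ℕ) : DecidableRel (cmGraph l t).Adj :=
  fun a b => inferInstanceAs (Decidable (a.1 ≠ b.1))

/-- Let `λ ∉ {0, -t_1, …, -t_s}` be an eigenvalue of the complete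
multipartite graph `K_{l_1*t_1, …, l_s*t_s}`.  Then every eigenvector `z` for `λ` is
constant on each `U_i`, with common values `z_i` satisfying
`(λ + t_i) z_i = m_1 z_1 + ⋯ + m_s z_s` (`m_i = l_i t_i`) for every `i`; consequently, if
`z ≠ 0` then all `z_i` are nonzero and pairwise distinct. -/
theorem stmt15 {s : ℕ} (l t : Fin s → ℕ)
    (hanti : ∀ i j : Fin s, i < j → t j < t i) (hl : ∀ i, 1 ≤ l i) (ht : ∀ i, 1 ≤ t i)
    (lam : ℝ) (hlam0 : lam ≠ 0) (hlamt : ∀ i, lam ≠ -(t i : ℝ))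
    (z : MV l t → ℝ) (hz : ((cmGraph l t).adjMatrix ℝ).mulVec z = lam • z) :
    ∃ zv : Fin s → ℝ,
      (∀ v : MV l t, z v = zv v.1.1) ∧
      (∀ i, (lam + (t i : ℝ)) * zv i = ∑ j, (l j : ℝ) * (t j : ℝ) * zv j) ∧
      (z ≠ 0 → (∀ i, zv i ≠ 0) ∧ ∀ i j : Fin s, i ≠ j → zv i ≠ zv j) := by
  have hltne : ∀ i, lam + (t i : ℝ) ≠ 0 := by
    intro i h
    exact hlamt i (by linarith)
  set S : ℝ := ∑ v : MV l t, z v with hS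
  -- key equation: lam * z v = S - (sum over the part of v)
  have hA : ∀ v : MV l t, lam * z v = S - ∑ k : Fin (t v.1.1), z ⟨v.1, k⟩ := by
    intro v
    have h1 := congrFun hz v
    rw [SimpleGraph.adjMatrix_mulVec_apply] at h1
    have hnb : (cmGraph l t).neighborFinset v
        = Finset.univ.filter (fun w : MV l t => ¬ w.1 = v.1) := by
      ext w
      rw [SimpleGraph.mem_neighborFinset]
      simp [SimpleGraph.mem_neighborFinset, cmGraph, SimpleGraph.completeMultipartiteGraph,
        ne_comm, eq_comm]
    rw [hnb] at h1
    have hsplit := Finset.sum_filter_add_sum_filter_not (Finset.univ : Finset (MV l t))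
      (fun w : MV l t => w.1 = v.1) z
    have hpart : ∑ w ∈ Finset.univ.filter (fun w : MV l t => w.1 = v.1), z w
        = ∑ k : Fin (t v.1.1), z ⟨v.1, k⟩ := by
      rw [Finset.sum_filter]
      rw [← Finset.univ_sigma_univ, Finset.sum_sigma]
      have : ∀ p : PartIdx l, (∑ k : Fin (t p.1), if p = v.1 then z ⟨p, k⟩ else 0)
          = if p = v.1 then ∑ k : Fin (t p.1), z ⟨p, k⟩ else 0 := by
        intro p
        split <;> simp
      rw [Finset.sum_congr rfl (fun p _ => this p), Finset.sum_ite_eq' Finset.univ v.1]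
      simp
    have : (lam • z) v = lam * z v := rfl
    rw [this] at h1
    rw [← h1, hS, ← hsplit, hpart]
    ring
  -- z is constant on each part
  have hconst : ∀ (p : PartIdx l) (k : Fin (t p.1)), lam * z ⟨p, k⟩ = S - ∑ k', z ⟨p, k'⟩ :=
    fun p k => hA ⟨p, k⟩
  have hval : ∀ v : MV l t, z v = S / (lam + (t v.1.1 : ℝ)) := by
    intro v
    obtain ⟨p, k⟩ := v
    have hsame : ∀ k' : Fin (t p.1), z ⟨p, k'⟩ = z ⟨p, k⟩ := by
      intro k'
      have h1 := hconst p k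
      have h2 := hconst p k'
      have : lam * z ⟨p, k'⟩ = lam * z ⟨p, k⟩ := by linarith
      exact mul_left_cancel₀ hlam0 this
    have hsum : ∑ k', z ⟨p, k'⟩ = (t p.1 : ℝ) * z ⟨p, k⟩ := by
      rw [Finset.sum_congr rfl (fun k' _ => hsame k')]
      simp [mul_comm]
    have h1 := hconst p k
    rw [hsum] at h1
    have : (lam + (t p.1 : ℝ)) * z ⟨p, k⟩ = S := by ring_nf; ring_nf at h1; linarith
    field_simp [hltne p.1]
    linarith
  refine ⟨fun i => S / (lam + (t i : ℝ)), fun v => hval v, ?_, ?_⟩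
  · -- the eigenvalue equations
    have hSsum : S = ∑ j, (l j : ℝ) * (t j : ℝ) * (S / (lam + (t j : ℝ))) := by
      calc S = ∑ v : MV l t, z v := rfl
        _ = ∑ v : MV l t, S / (lam + (t v.1.1 : ℝ)) := Finset.sum_congr rfl fun v _ => hval v
        _ = ∑ p : PartIdx l, ∑ k : Fin (t p.1), S / (lam + (t p.1 : ℝ)) := by
            rw [← Finset.univ_sigma_univ, Finset.sum_sigma]
        _ = ∑ p : PartIdx l, (t p.1 : ℝ) * (S / (lam + (t p.1 : ℝ))) := by
            simp [mul_comm]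
        _ = ∑ i, ∑ j : Fin (l i), (t i : ℝ) * (S / (lam + (t i : ℝ))) := by
            rw [← Finset.univ_sigma_univ, Finset.sum_sigma]
        _ = ∑ j, (l j : ℝ) * (t j : ℝ) * (S / (lam + (t j : ℝ))) := by
            simp [mul_assoc, mul_comm]
    intro i
    rw [← hSsum]
    show (lam + (t i : ℝ)) * (S / (lam + (t i : ℝ))) = S
    rw [mul_div_cancel₀ _ (hltne i)]
  · intro hzne
    have hSne : S ≠ 0 := by
      intro h0
      apply hzne
      funext v
      rw [hval v, h0, zero_div]
      rfl
    constructor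
    · exact fun i => div_ne_zero hSne (hltne i)
    · intro i j hij h
      simp only at h
      have hx : S / (lam + (t j : ℝ)) ≠ 0 := div_ne_zero hSne (hltne j)
      have e1 : (lam + (t i : ℝ)) * (S / (lam + (t i : ℝ))) = S := by
        rw [mul_div_cancel₀ _ (hltne i)]
      have e2 : (lam + (t j : ℝ)) * (S / (lam + (t j : ℝ))) = S := by
        rw [mul_div_cancel₀ _ (hltne j)]
      have heq : (lam + (t i : ℝ)) * (S / (lam + (t j : ℝ)))
          = (lam + (t j : ℝ)) * (S / (lam + (t j : ℝ))) := by
        rw [e2, ← h, e1]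
      have h2 : lam + (t i : ℝ) = lam + (t j : ℝ) := mul_right_cancel₀ hx heq
      have hti : (t i : ℝ) = (t j : ℝ) := by linarith
      have htij : t i = t j := Nat.cast_injective hti
      rcases lt_or_gt_of_ne hij with hlt | hlt
      · have := hanti i j hlt; omega
      · have := hanti j i hlt; omega
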